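/- Let G = (V,E) be a block graph with no pendant paths, different from a path, and 𝓘 the collection of all connected zero forcing sets of G. Then any superset of a connected zero forcing set of G is again a connected zero forcing set, and for every A ⊆ V, all minimal supersets of A lying in 𝓘 have the same cardinality. -/

import Mathlib

/-- A vertex is (eventually) forced, starting from the initially colored set `S`,
under the zero forcing color change rule: a colored vertex all of whose other
neighbors are colored forces its remaining neighbor. -/
inductive SimpleGraph.Forced {V : Type*} (G : SimpleGraph V) (S : Set V) : V → Prop
  | init (v : V) (hv : v ∈ S) : SimpleGraph.Forced G S v
  | force (u v : V) (hu : SimpleGraph.Forced G S u) (huv : G.Adj u v)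
      (hrest : ∀ w, G.Adj u w → w ≠ v → SimpleGraph.Forced G S w) :
      SimpleGraph.Forced G S v

/-- `S` is a zero forcing set of `G`. -/
def SimpleGraph.IsZeroForcingSet {V : Type*} (G : SimpleGraph V) (S : Set V) : Prop :=
  ∀ v, G.Forced S v

/-- `S` is a connected zero forcing set of `G`. -/
def SimpleGraph.IsConnectedZFS {V : Type*} (G : SimpleGraph V) (S : Set V) : Prop :=
  G.IsZeroForcingSet S ∧ (G.induce S).Connected

/-- The zero forcing number `Z(G)`. -/
noncomputable def SimpleGraph.zfNumber {V : Type*} (G : SimpleGraph V) : ℕ :=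
  sInf {n | ∃ S : Set V, G.IsZeroForcingSet S ∧ S.ncard = n}

/-- The connected zero forcing number `Z_c(G)`. -/
noncomputable def SimpleGraph.czfNumber {V : Type*} (G : SimpleGraph V) : ℕ :=
  sInf {n | ∃ S : Set V, G.IsConnectedZFS S ∧ S.ncard = n}

/-- `P` is (the vertex set of) a connected component of `G − X`. -/
def SimpleGraph.IsCompOfDel {V : Type*} (G : SimpleGraph V) (X P : Set V) : Prop :=
  P.Nonempty ∧ Disjoint P X ∧ (G.induce P).Connected ∧
    ∀ u ∈ P, ∀ w, G.Adj u w → w ∉ X → w ∈ P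

/-- The induced subgraph `G[P]` is a path graph. -/
def SimpleGraph.IsPathGraphOn {V : Type*} (G : SimpleGraph V) (P : Set V) : Prop :=
  P.Nonempty ∧ (G.induce P).Connected ∧
    (∀ v ∈ P, (G.neighborSet v ∩ P).ncard ≤ 2) ∧
    ∃ v ∈ P, (G.neighborSet v ∩ P).ncard ≤ 1

/-- `P` is a pendant path attached to `v`: a path component of `G − v`,
one of whose ends (a base) is adjacent to `v`. -/
def SimpleGraph.IsPendantPath {V : Type*} (G : SimpleGraph V) (v : V) (P : Set V) : Prop :=
  G.IsCompOfDel {v} P ∧ G.IsPathGraphOn P ∧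
    ∃ b ∈ P, G.Adj v b ∧ (G.neighborSet b ∩ P).ncard ≤ 1

/-- `v` is a cut vertex of `G`. -/
def SimpleGraph.IsCutVertex {V : Type*} (G : SimpleGraph V) (v : V) : Prop :=
  ¬ (G.induce {v}ᶜ).Connected

/-- `G[B]` is connected and has no cut vertices. -/
def SimpleGraph.IsBiconnectedSet {V : Type*} (G : SimpleGraph V) (B : Set V) : Prop :=
  (G.induce B).Connected ∧
    ∀ v ∈ B, (B \ {v}).Nonempty → (G.induce (B \ {v})).Connected

/-- `B` is (the vertex set of) a block of `G`: a maximal subgraph with no cut vertices. -/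
def SimpleGraph.IsBlock {V : Type*} (G : SimpleGraph V) (B : Set V) : Prop :=
  G.IsBiconnectedSet B ∧ ∀ B', B ⊆ B' → G.IsBiconnectedSet B' → B' = B

/-- The induced subgraph `G[C]` is a cycle. -/
def SimpleGraph.IsCycleGraphOn {V : Type*} (G : SimpleGraph V) (C : Set V) : Prop :=
  3 ≤ C.ncard ∧ (G.induce C).Connected ∧ ∀ v ∈ C, (G.neighborSet v ∩ C).ncard = 2

/-- `D` is a (possibly empty) segment of the cycle `G[C]`:
a proper set of consecutive vertices along the cycle. -/
def SimpleGraph.IsSegmentOf {V : Type*} (G : SimpleGraph V) (C D : Set V) : Prop :=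
  D ⊆ C ∧ (D = ∅ ∨ ((G.induce D).Connected ∧ D ≠ C))

/-- The minimum degree of the induced subgraph `G[B]`. -/
noncomputable def SimpleGraph.minDegOn {V : Type*} (G : SimpleGraph V) (B : Set V) : ℕ :=
  sInf ((fun v => (G.neighborSet v ∩ B).ncard) '' B)

/-- `G − v` has at least three connected components. -/
def SimpleGraph.DelHasThreeComps {V : Type*} (G : SimpleGraph V) (v : V) : Prop :=
  ∃ P₁ P₂ P₃ : Set V, G.IsCompOfDel {v} P₁ ∧ G.IsCompOfDel {v} P₂ ∧ G.IsCompOfDel {v} P₃ ∧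
    Disjoint P₁ P₂ ∧ Disjoint P₁ P₃ ∧ Disjoint P₂ P₃

/-- `G − v` has exactly two connected components. -/
def SimpleGraph.DelHasTwoComps {V : Type*} (G : SimpleGraph V) (v : V) : Prop :=
  ∃ P₁ P₂ : Set V, G.IsCompOfDel {v} P₁ ∧ G.IsCompOfDel {v} P₂ ∧
    Disjoint P₁ P₂ ∧ P₁ ∪ P₂ = {v}ᶜ

set_option linter.unusedSectionVars false
namespace ZFAux
open SimpleGraph Set Classical

variable {V : Type} [Fintype V] {G : SimpleGraph V}

/-- Reachability via a walk whose support stays inside `A`. -/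
def ReachIn (G : SimpleGraph V) (A : Set V) (x y : V) : Prop :=
  ∃ p : G.Walk x y, ∀ z ∈ p.support, z ∈ A

namespace ReachIn

lemma rfl' {A : Set V} {x : V} (hx : x ∈ A) : ReachIn G A x x :=
  ⟨SimpleGraph.Walk.nil, by simpa using hx⟩

lemma symm {A : Set V} {x y : V} (h : ReachIn G A x y) : ReachIn G A y x := by
  obtain ⟨p, hp⟩ := h
  exact ⟨p.reverse, by simpa [SimpleGraph.Walk.support_reverse] using hp⟩

lemma trans {A : Set V} {x y z : V} (h : ReachIn G A x y) (h' : ReachIn G A y z) :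
    ReachIn G A x z := by
  obtain ⟨p, hp⟩ := h; obtain ⟨q, hq⟩ := h'
  refine ⟨p.append q, fun w hw => ?_⟩
  rw [SimpleGraph.Walk.mem_support_append_iff] at hw
  exact hw.elim (hp w) (hq w)

lemma mono {A B : Set V} (hAB : A ⊆ B) {x y : V} (h : ReachIn G A x y) : ReachIn G B x y := by
  obtain ⟨p, hp⟩ := h; exact ⟨p, fun z hz => hAB (hp z hz)⟩

lemma left_mem {A : Set V} {x y : V} (h : ReachIn G A x y) : x ∈ A := by
  obtain ⟨p, hp⟩ := h; exact hp x p.start_mem_support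

lemma right_mem {A : Set V} {x y : V} (h : ReachIn G A x y) : y ∈ A := by
  obtain ⟨p, hp⟩ := h; exact hp y p.end_mem_support

lemma tail {A : Set V} {x y z : V} (h : ReachIn G A x y) (hadj : G.Adj y z) (hz : z ∈ A) :
    ReachIn G A x z :=
  h.trans ⟨hadj.toWalk, by simpa using ⟨h.right_mem, hz⟩⟩

lemma single {A : Set V} {x y : V} (hadj : G.Adj x y) (hx : x ∈ A) (hy : y ∈ A) :
    ReachIn G A x y := ⟨hadj.toWalk, by simpa using ⟨hx, hy⟩⟩

end ReachIn

lemma reachIn_of_walk {A : Set V} {x y : V} (p : G.Walk x y) (hp : ∀ z ∈ p.support, z ∈ A) :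
    ReachIn G A x y := ⟨p, hp⟩

lemma induce_reachable_of_reachIn {A : Set V} {x y : V} (h : ReachIn G A x y)
    (hx : x ∈ A) (hy : y ∈ A) : (G.induce A).Reachable ⟨x, hx⟩ ⟨y, hy⟩ := by
  obtain ⟨p, hp⟩ := h
  induction p with
  | nil => rfl
  | @cons a b c hab q ih =>
      have hb : b ∈ A := hp b (by simp)
      have ha : a ∈ A := hp a (by simp)
      have hadj : (G.induce A).Adj ⟨a, ha⟩ ⟨b, hb⟩ := by simpa using hab
      exact hadj.reachable.trans (ih hb hy (fun z hz => hp z (by simp [hz])))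

lemma reachIn_of_induce_reachable {A : Set V} {x y : A}
    (h : (G.induce A).Reachable x y) : ReachIn G A (x : V) (y : V) := by
  obtain ⟨p⟩ := h
  induction p with
  | nil => exact ReachIn.rfl' (Subtype.mem _)
  | @cons a b c hab q ih =>
      exact (ReachIn.single (by simpa using hab) a.2 b.2).trans ih

lemma induce_connected_iff {A : Set V} :
    (G.induce A).Connected ↔ A.Nonempty ∧ ∀ x ∈ A, ∀ y ∈ A, ReachIn G A x y := by
  constructor
  · intro h
    refine ⟨?_, fun x hx y hy => reachIn_of_induce_reachable (h.preconnected ⟨x, hx⟩ ⟨y, hy⟩)⟩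
    obtain ⟨⟨a, ha⟩⟩ := h.nonempty
    exact ⟨a, ha⟩
  · rintro ⟨⟨a, ha⟩, h⟩
    have : Nonempty A := ⟨⟨a, ha⟩⟩
    exact ⟨fun x y => induce_reachable_of_reachIn (h _ x.2 _ y.2) x.2 y.2⟩

/-- A set is `Closed` if no vertex in it can force a vertex outside it. -/
def Closed (G : SimpleGraph V) (T : Set V) : Prop :=
  ∀ u ∈ T, ∀ w, G.Adj u w → w ∉ T → ∃ w', G.Adj u w' ∧ w' ≠ w ∧ w' ∉ T

lemma forced_mem_closed {S T : Set V} (hc : Closed G T) (hST : S ⊆ T) {v : V}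
    (h : G.Forced S v) : v ∈ T := by
  induction h with
  | init v hv => exact hST hv
  | force u v hu huv hrest ihu ihrest =>
      by_contra hv
      obtain ⟨w', hw1, hw2, hw3⟩ := hc u ihu v huv hv
      exact hw3 (ihrest w' hw1 hw2)

lemma not_zfs_of_closed {S T : Set V} (hc : Closed G T) (hST : S ⊆ T) (hne : T ≠ univ) :
    ¬ G.IsZeroForcingSet S := by
  intro h
  apply hne
  ext v; simp only [mem_univ, iff_true]
  exact forced_mem_closed hc hST (h v)

lemma zfs_of_closed_forall {S : Set V} (h : ∀ T, Closed G T → S ⊆ T → T = univ) :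
    G.IsZeroForcingSet S := by
  intro v
  have hT : Closed G {w | G.Forced S w} := by
    intro u hu w hadj hw
    by_contra hcon
    push_neg at hcon
    exact hw (SimpleGraph.Forced.force u w hu hadj (fun w' h1 h2 => by
      by_contra h3
      exact h3 (hcon w' h1 h2)))
  have := h _ hT (fun s hs => SimpleGraph.Forced.init s hs)
  have : v ∈ {w | G.Forced S w} := this ▸ mem_univ v
  exact this

end ZFAux

namespace ZFAux
open SimpleGraph Set Classical

variable {V : Type} [Fintype V] {G : SimpleGraph V}

lemma reachIn_of_biconnected {B : Set V} (hB : G.IsBiconnectedSet B) {a b : V}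
    (ha : a ∈ B) (hb : b ∈ B) : ReachIn G B a b :=
  (induce_connected_iff.mp hB.1).2 a ha b hb

lemma reachIn_diff_of_biconnected {B : Set V} (hB : G.IsBiconnectedSet B) {z a b : V}
    (ha : a ∈ B \ {z}) (hb : b ∈ B \ {z}) : ReachIn G (B \ {z}) a b := by
  by_cases hz : z ∈ B
  · exact (induce_connected_iff.mp (hB.2 z hz ⟨a, ha⟩)).2 a ha b hb
  · rw [Set.diff_singleton_eq_self hz]
    exact reachIn_of_biconnected hB ha.1 hb.1

lemma biconnected_of_pairwise {A : Set V} (hne : A.Nonempty)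
    (h : ∀ x ∈ A, ∀ y ∈ A, x ≠ y → G.Adj x y) : G.IsBiconnectedSet A := by
  constructor
  · refine induce_connected_iff.mpr ⟨hne, fun x hx y hy => ?_⟩
    rcases eq_or_ne x y with rfl | hxy
    · exact ReachIn.rfl' hx
    · exact ReachIn.single (h x hx y hy hxy) hx hy
  · intro v hv hne'
    refine induce_connected_iff.mpr ⟨hne', fun x hx y hy => ?_⟩
    rcases eq_or_ne x y with rfl | hxy
    · exact ReachIn.rfl' hx
    · exact ReachIn.single (h x hx.1 y hy.1 hxy) hx hy

lemma exists_block_superset {A : Set V} (hA : G.IsBiconnectedSet A) :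
    ∃ B, G.IsBlock B ∧ A ⊆ B := by
  have hfin : ({X | G.IsBiconnectedSet X ∧ A ⊆ X} : Set (Set V)).Finite := Set.toFinite _
  obtain ⟨B, hB, hmax⟩ := Set.Finite.exists_maximalFor id _ hfin ⟨A, hA, subset_rfl⟩
  refine ⟨B, ⟨hB.1, fun B' hBB' hbi' => ?_⟩, hB.2⟩
  exact Set.Subset.antisymm (hmax ⟨hbi', hB.2.trans hBB'⟩ hBB') hBB'

lemma card_two_le (hG : G.Connected) (hnpath : ¬ G.IsPathGraphOn Set.univ) :
    1 < Fintype.card V := by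
  by_contra h
  push_neg at h
  have hsub : Subsingleton V := by
    rcases Fintype.card_le_one_iff_subsingleton.mp h with h'
    exact h'
  apply hnpath
  obtain ⟨v⟩ := hG.nonempty
  have hdeg : ∀ w : V, G.neighborSet w ∩ Set.univ = ∅ := by
    intro w
    ext a
    simp only [Set.mem_inter_iff, SimpleGraph.mem_neighborSet, Set.mem_univ, and_true,
      Set.mem_empty_iff_false, iff_false]
    intro hadj
    exact hadj.ne (Subsingleton.elim _ _)
  refine ⟨⟨v, trivial⟩, ?_, ?_, ⟨v, trivial, ?_⟩⟩
  · refine induce_connected_iff.mpr ⟨⟨v, trivial⟩, fun x hx y hy => ?_⟩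
    have : x = y := Subsingleton.elim _ _
    subst this
    exact ReachIn.rfl' hx
  · intro w _
    rw [hdeg w]
    simp
  · rw [hdeg v]
    simp

lemma exists_adj (hG : G.Connected) (hcard : 1 < Fintype.card V) (v : V) :
    ∃ w, G.Adj v w := by
  obtain ⟨w, hw⟩ := Fintype.exists_ne_of_one_lt_card hcard v
  obtain ⟨p⟩ := hG.preconnected v w
  cases p with
  | nil => exact absurd rfl hw.symm
  | cons h _ => exact ⟨_, h⟩

lemma block_nontrivial (hG : G.Connected) (hcard : 1 < Fintype.card V) {B : Set V}
    (hB : G.IsBlock B) : ∃ x ∈ B, ∃ y ∈ B, x ≠ y := by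
  obtain ⟨hne, _⟩ := induce_connected_iff.mp hB.1.1
  obtain ⟨x, hx⟩ := hne
  by_contra h
  push_neg at h
  have hBx : B = {x} := by
    apply Set.eq_singleton_iff_unique_mem.mpr
    exact ⟨hx, fun y hy => by by_contra hne'; exact hne' (h x hx y hy).symm⟩
  obtain ⟨w, hw⟩ := exists_adj hG hcard x
  have hbi : G.IsBiconnectedSet {x, w} := by
    apply biconnected_of_pairwise ⟨x, by simp⟩
    intro a ha b hb hab
    rcases ha with rfl | ha <;> rcases hb with rfl | hb
    · exact absurd rfl hab
    · rcases hb with rfl; exact hw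
    · rcases ha with rfl; exact hw.symm
    · rcases ha with rfl; rcases hb with rfl; exact absurd rfl hab
  have := hB.2 {x, w} (by rw [hBx]; simp) hbi
  have hwB : w ∈ B := by rw [← this]; simp
  rw [hBx] at hwB
  simp at hwB
  exact hw.ne hwB.symm

lemma reachIn_support_start {x y : V} {p : G.Walk x y} {a : V} (ha : a ∈ p.support) :
    ReachIn G {c | c ∈ p.support} a x := by
  refine ⟨(p.takeUntil a ha).reverse, fun z hz => ?_⟩
  rw [SimpleGraph.Walk.support_reverse, List.mem_reverse] at hz
  exact p.support_takeUntil_subset ha hz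

lemma path_split {x y : V} (p : G.Walk x y) (hp : p.IsPath) (z : V) {w : V}
    (hw : w ∈ p.support) (hwz : w ≠ z) :
    ∃ e, (e = x ∨ e = y) ∧ e ≠ z ∧ ReachIn G ({c | c ∈ p.support} \ {z}) w e := by
  by_cases hz1 : z ∈ (p.takeUntil w hw).support
  · -- go forward to y
    have hnd := hp.support_nodup
    rw [← p.take_spec hw, SimpleGraph.Walk.support_append] at hnd
    have hdisj : z ∉ (p.dropUntil w hw).support.tail :=
      fun hmem => (List.disjoint_of_nodup_append hnd) hz1 hmem
    have hzq2 : z ∉ (p.dropUntil w hw).support := by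
      rw [SimpleGraph.Walk.support_eq_cons]
      intro hmem
      rcases List.mem_cons.mp hmem with rfl | hmem
      · exact hwz rfl
      · exact hdisj hmem
    refine ⟨y, Or.inr rfl, fun hyz => hzq2 (hyz ▸ (p.dropUntil w hw).end_mem_support), ?_⟩
    refine ⟨p.dropUntil w hw, fun c hc => ?_⟩
    exact ⟨p.support_dropUntil_subset hw hc, fun hcz => hzq2 (by rwa [Set.mem_singleton_iff.mp hcz] at hc)⟩
  · refine ⟨x, Or.inl rfl, ?_, ?_⟩
    · intro hxz
      exact hz1 (hxz ▸ (p.takeUntil w hw).start_mem_support)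
    · refine ⟨(p.takeUntil w hw).reverse, fun c hc => ?_⟩
      rw [SimpleGraph.Walk.support_reverse, List.mem_reverse] at hc
      exact ⟨p.support_takeUntil_subset hw hc, fun hcz => hz1 (by rwa [Set.mem_singleton_iff.mp hcz] at hc)⟩

end ZFAux

namespace ZFAux
open SimpleGraph Set Classical

variable {V : Type} [Fintype V] {G : SimpleGraph V}

/-- A non-cut vertex of a connected block graph is simplicial: its neighbors are
pairwise adjacent. -/
lemma simplicial_of_not_cut
    (hblock : ∀ B : Set V, G.IsBlock B → ∀ u ∈ B, ∀ w ∈ B, u ≠ w → G.Adj u w)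
    {m : V} (hm : ¬ G.IsCutVertex m) {u w : V} (hu : G.Adj m u) (hw : G.Adj m w)
    (huw : u ≠ w) : G.Adj u w := by
  have hconn : (G.induce ({m}ᶜ : Set V)).Connected := not_not.mp hm
  have humem : u ∈ ({m}ᶜ : Set V) := by simp [hu.ne']
  have hwmem : w ∈ ({m}ᶜ : Set V) := by simp [hw.ne']
  obtain ⟨p0, hp0⟩ := (induce_connected_iff.mp hconn).2 u humem w hwmem
  set p := p0.bypass with hpdef
  have hp : p.IsPath := SimpleGraph.Walk.bypass_isPath p0
  have hsupp : ∀ z ∈ p.support, z ∈ ({m}ᶜ : Set V) :=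
    fun z hz => hp0 z (SimpleGraph.Walk.support_bypass_subset p0 hz)
  set X : Set V := {c | c ∈ p.support} ∪ {m} with hXdef
  have hmX : m ∈ X := by simp [hXdef]
  have hsuppX : ({c | c ∈ p.support} : Set V) ⊆ X := subset_union_left
  have huX : u ∈ X := hsuppX p.start_mem_support
  have hwX : w ∈ X := hsuppX p.end_mem_support
  -- every element of X minus z reaches an anchor
  have hbi : G.IsBiconnectedSet X := by
    constructor
    · refine induce_connected_iff.mpr ⟨⟨m, hmX⟩, fun a ha b hb => ?_⟩
      have key : ∀ a ∈ X, ReachIn G X a m := by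
        intro a ha
        rcases ha with ha | ha
        · exact ((reachIn_support_start ha).mono hsuppX).tail hu.symm hmX
        · rw [Set.mem_singleton_iff.mp ha]; exact ReachIn.rfl' hmX
      exact (key a ha).trans (key b hb).symm
    · intro z hz hne
      refine induce_connected_iff.mpr ⟨hne, fun a ha b hb => ?_⟩
      by_cases hzm : z = m
      · -- z = m: within the path support (which avoids m)
        have hsub : ({c | c ∈ p.support} : Set V) ⊆ X \ {z} := fun c hc =>
          ⟨hsuppX hc, fun hcm => (hsupp c hc)
            (by simp [Set.mem_singleton_iff.mp hcm, hzm])⟩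
        have key : ∀ a ∈ X \ {z}, ReachIn G (X \ {z}) a u := by
          intro a ha
          have haP : a ∈ p.support := by
            rcases ha.1 with h' | h'
            · exact h'
            · exact absurd (by simp [Set.mem_singleton_iff.mp h', hzm] : a ∈ ({z} : Set V)) ha.2
          exact (reachIn_support_start haP).mono hsub
        exact (key a ha).trans (key b hb).symm
      · have key : ∀ a ∈ X \ {z}, ReachIn G (X \ {z}) a m := by
          intro a ha
          rcases ha.1 with haP | ham
          · have haz : a ≠ z := fun h => ha.2 (by simp [h])
            obtain ⟨e, he, hez, hre⟩ := path_split p hp z haP haz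
            have hsub2 : ({c | c ∈ p.support} : Set V) \ {z} ⊆ X \ {z} :=
              Set.diff_subset_diff_left hsuppX
            have hemem : Adj G e m := by
              rcases he with rfl | rfl
              · exact hu.symm
              · exact hw.symm
            exact (hre.mono hsub2).tail hemem ⟨hmX, fun h => hzm (Set.mem_singleton_iff.mp h).symm⟩
          · rw [Set.mem_singleton_iff.mp ham]
            exact ReachIn.rfl' ⟨hmX, fun h => hzm (Set.mem_singleton_iff.mp h).symm⟩
        exact (key a ha).trans (key b hb).symm
  obtain ⟨B, hB, hXB⟩ := exists_block_superset hbi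
  exact hblock B hB u (hXB huX) w (hXB hwX) huw

/-- Any block containing a non-cut vertex is unique. -/
lemma block_unique
    (hblock : ∀ B : Set V, G.IsBlock B → ∀ u ∈ B, ∀ w ∈ B, u ≠ w → G.Adj u w)
    {m : V} (hm : ¬ G.IsCutVertex m) {B B' : Set V} (hB : G.IsBlock B) (hmB : m ∈ B)
    (hB' : G.IsBlock B') (hmB' : m ∈ B') : B = B' := by
  have hpair : ∀ x ∈ B ∪ B', ∀ y ∈ B ∪ B', x ≠ y → G.Adj x y := by
    have hmem : ∀ x ∈ B ∪ B', x ≠ m → G.Adj m x := by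
      rintro x (hx | hx) hxm
      · exact hblock B hB m hmB x hx (Ne.symm hxm)
      · exact hblock B' hB' m hmB' x hx (Ne.symm hxm)
    intro x hx y hy hxy
    rcases eq_or_ne x m with rfl | hxm
    · exact hmem y hy (Ne.symm hxy)
    rcases eq_or_ne y m with rfl | hym
    · exact (hmem x hx hxm).symm
    · exact simplicial_of_not_cut hblock hm (hmem x hx hxm) (hmem y hy hym) hxy
  have hbi : G.IsBiconnectedSet (B ∪ B') := biconnected_of_pairwise ⟨m, Or.inl hmB⟩ hpair
  have h1 : B ∪ B' = B := hB.2 _ subset_union_left hbi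
  have hsub : B' ⊆ B := by rw [← h1]; exact subset_union_right
  exact hB'.2 B hsub hB.1

/-- The closed neighborhood of a non-cut vertex is contained in a block. -/
lemma exists_block_nbhd
    (hblock : ∀ B : Set V, G.IsBlock B → ∀ u ∈ B, ∀ w ∈ B, u ≠ w → G.Adj u w)
    {m : V} (hm : ¬ G.IsCutVertex m) :
    ∃ B, G.IsBlock B ∧ insert m (G.neighborSet m) ⊆ B := by
  apply exists_block_superset
  apply biconnected_of_pairwise ⟨m, by simp⟩
  intro x hx y hy hxy
  rcases hx with rfl | hx
  · rcases hy with rfl | hy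
    · exact absurd rfl hxy
    · exact hy
  · rcases hy with rfl | hy
    · exact hx.symm
    · exact simplicial_of_not_cut hblock hm hx hy hxy

/-- Separation: a common vertex of two distinct blocks separates them. -/
lemma separation {B₁ B₂ : Set V} (hB₁ : G.IsBlock B₁) (hB₂ : G.IsBlock B₂)
    (hne : B₁ ≠ B₂) {u x y : V} (hu₁ : u ∈ B₁) (hu₂ : u ∈ B₂) (hx : x ∈ B₁) (hxu : x ≠ u)
    (hy : y ∈ B₂) (hyu : y ≠ u) : ¬ ReachIn G ({u}ᶜ : Set V) x y := by
  intro h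
  obtain ⟨p0, hp0⟩ := h
  set p := p0.bypass with hpdef
  have hp : p.IsPath := SimpleGraph.Walk.bypass_isPath p0
  have hsupp : ∀ z ∈ p.support, z ∈ ({u}ᶜ : Set V) :=
    fun z hz => hp0 z (SimpleGraph.Walk.support_bypass_subset p0 hz)
  set X : Set V := B₁ ∪ B₂ ∪ {c | c ∈ p.support} with hXdef
  have hB1X : B₁ ⊆ X := fun c hc => Or.inl (Or.inl hc)
  have hB2X : B₂ ⊆ X := fun c hc => Or.inl (Or.inr hc)
  have hPX : ({c | c ∈ p.support} : Set V) ⊆ X := fun c hc => Or.inr hc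
  have hbi : G.IsBiconnectedSet X := by
    constructor
    · refine induce_connected_iff.mpr ⟨⟨u, hB1X hu₁⟩, fun a ha b hb => ?_⟩
      have key : ∀ a ∈ X, ReachIn G X a u := by
        rintro a ((ha | ha) | ha)
        · exact (reachIn_of_biconnected hB₁.1 ha hu₁).mono hB1X
        · exact (reachIn_of_biconnected hB₂.1 ha hu₂).mono hB2X
        · exact ((reachIn_support_start ha).mono hPX).trans
            ((reachIn_of_biconnected hB₁.1 hx hu₁).mono hB1X)
      exact (key a ha).trans (key b hb).symm
    · intro z hz hnz
      refine induce_connected_iff.mpr ⟨hnz, fun a ha b hb => ?_⟩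
      by_cases hzu : z = u
      · subst hzu
        have hd1 : B₁ \ {z} ⊆ X \ {z} := Set.diff_subset_diff_left hB1X
        have hd2 : B₂ \ {z} ⊆ X \ {z} := Set.diff_subset_diff_left hB2X
        have hdP : ({c | c ∈ p.support} : Set V) ⊆ X \ {z} := fun c hc =>
          ⟨hPX hc, fun hcz => (hsupp c hc) (Set.mem_singleton_iff.mp hcz)⟩
        have hxd : x ∈ B₁ \ {z} := ⟨hx, by simpa using hxu⟩
        have hyd : y ∈ B₂ \ {z} := ⟨hy, by simpa using hyu⟩
        have hyx : ReachIn G (X \ {z}) y x := by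
          refine (reachIn_of_walk p.reverse ?_).mono hdP
          intro c hc
          rwa [SimpleGraph.Walk.support_reverse, List.mem_reverse] at hc
        have key : ∀ a ∈ X \ {z}, ReachIn G (X \ {z}) a x := by
          rintro a ⟨(ha | ha) | ha, haz⟩
          · exact (reachIn_diff_of_biconnected hB₁.1 ⟨ha, haz⟩ hxd).mono hd1
          · exact ((reachIn_diff_of_biconnected hB₂.1 ⟨ha, haz⟩ hyd).mono hd2).trans hyx
          · exact (reachIn_support_start ha).mono hdP
        exact (key a ha).trans (key b hb).symm
      · have humem : u ∈ X \ {z} := ⟨hB1X hu₁, by simpa using fun h => hzu h.symm⟩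
        have hd1 : B₁ \ {z} ⊆ X \ {z} := Set.diff_subset_diff_left hB1X
        have hd2 : B₂ \ {z} ⊆ X \ {z} := Set.diff_subset_diff_left hB2X
        have hxz' : ∀ e, (e = x ∨ e = y) → e ≠ z → ReachIn G (X \ {z}) e u := by
          rintro e (rfl | rfl) hez
          · exact (reachIn_diff_of_biconnected hB₁.1 ⟨hx, by simpa using hez⟩
              ⟨hu₁, by simpa using fun h => hzu h.symm⟩).mono hd1
          · exact (reachIn_diff_of_biconnected hB₂.1 ⟨hy, by simpa using hez⟩
              ⟨hu₂, by simpa using fun h => hzu h.symm⟩).mono hd2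
        have key : ∀ a ∈ X \ {z}, ReachIn G (X \ {z}) a u := by
          rintro a ⟨(ha | ha) | ha, haz⟩
          · exact (reachIn_diff_of_biconnected hB₁.1 ⟨ha, haz⟩
              ⟨hu₁, by simpa using fun h => hzu h.symm⟩).mono hd1
          · exact (reachIn_diff_of_biconnected hB₂.1 ⟨ha, haz⟩
              ⟨hu₂, by simpa using fun h => hzu h.symm⟩).mono hd2
          · have haz' : a ≠ z := by simpa using haz
            obtain ⟨e, he, hez, hre⟩ := path_split p hp z ha haz'
            have hsub2 : ({c | c ∈ p.support} : Set V) \ {z} ⊆ X \ {z} :=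
              Set.diff_subset_diff_left hPX
            exact (hre.mono hsub2).trans (hxz' e he hez)
        exact (key a ha).trans (key b hb).symm
  have h1 : X = B₁ := hB₁.2 X hB1X hbi
  have hsub : B₂ ⊆ B₁ := h1 ▸ hB2X
  exact hne (hB₂.2 B₁ hsub hB₁.1) |>.elim
end ZFAux

namespace ZFAux
open SimpleGraph Set Classical

variable {V : Type} [Fintype V] {G : SimpleGraph V}

/-- The characterization predicate: contains all cut vertices, and misses at most one
vertex from each block. -/
def CharSet (G : SimpleGraph V) (S : Set V) : Prop :=
  (∀ v, G.IsCutVertex v → v ∈ S) ∧ ∀ B, G.IsBlock B → (B \ S).ncard ≤ 1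

lemma eq_singleton_of_ncard_le_one {t : Set V} {x : V} (hx : x ∈ t) (h : t.ncard ≤ 1) :
    t = {x} := by
  apply Set.eq_singleton_iff_unique_mem.mpr
  exact ⟨hx, fun y hy => (Set.ncard_le_one (Set.toFinite t)).mp h y hy x hx⟩

/-- Missing at most one per block for zero forcing sets containing all cut vertices. -/
lemma block_diff_le_one_of_zfs
    (hblock : ∀ B : Set V, G.IsBlock B → ∀ u ∈ B, ∀ w ∈ B, u ≠ w → G.Adj u w)
    {S : Set V} (hzfs : G.IsZeroForcingSet S) (hcut : ∀ v, G.IsCutVertex v → v ∈ S)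
    {B : Set V} (hB : G.IsBlock B) : (B \ S).ncard ≤ 1 := by
  by_contra h
  push_neg at h
  obtain ⟨m₁, hm₁, m₂, hm₂, hne⟩ := (Set.one_lt_ncard (Set.toFinite _)).mp h
  have hns : ∀ m, m ∈ B \ S → ¬ G.IsCutVertex m := fun m hm hc => hm.2 (hcut m hc)
  have hadj12 : G.Adj m₁ m₂ := hblock B hB m₁ hm₁.1 m₂ hm₂.1 hne
  set T : Set V := {m₁, m₂}ᶜ with hT
  have hST : S ⊆ T := by
    intro s hs
    simp only [hT, Set.mem_compl_iff, Set.mem_insert_iff, Set.mem_singleton_iff]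
    rintro (rfl | rfl)
    · exact hm₁.2 hs
    · exact hm₂.2 hs
  have hTu : T ≠ univ := by
    intro hTu
    have : m₁ ∈ T := hTu ▸ mem_univ m₁
    simp [hT] at this
  have hclosed : Closed G T := by
    intro u hu w hadj hw
    have hw' : w = m₁ ∨ w = m₂ := by
      by_contra h'
      push_neg at h'
      exact hw (by simp [hT, h'.1, h'.2])
    have humem : u ≠ m₁ ∧ u ≠ m₂ := by
      constructor <;> (intro h'; subst h'; simp [hT] at hu)
    rcases hw' with rfl | rfl
    · refine ⟨m₂, ?_, hne.symm, by simp [hT]⟩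
      exact simplicial_of_not_cut hblock (hns _ hm₁) hadj.symm hadj12 humem.2
    · refine ⟨m₁, ?_, hne, by simp [hT]⟩
      exact simplicial_of_not_cut hblock (hns _ hm₂) hadj.symm hadj12.symm humem.1
  exact not_zfs_of_closed hclosed hST hTu hzfs

end ZFAux

namespace ZFAux
open SimpleGraph Set Classical

variable {V : Type} [Fintype V] {G : SimpleGraph V}

lemma biconnected_singleton (x : V) : G.IsBiconnectedSet {x} :=
  biconnected_of_pairwise ⟨x, rfl⟩ (by rintro a rfl b rfl h; exact absurd rfl h)

lemma charSet_nonempty (hG : G.Connected) (hcard : 1 < Fintype.card V)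
    {S : Set V} (hS : CharSet G S) : S.Nonempty := by
  obtain ⟨v⟩ := hG.nonempty
  obtain ⟨B, hB, hvB⟩ := exists_block_superset (biconnected_singleton v)
  obtain ⟨x, hx, y, hy, hxy⟩ := block_nontrivial hG hcard hB
  by_contra h
  rw [Set.not_nonempty_iff_eq_empty] at h
  have hBdiff : B \ S = B := by rw [h]; ext a; simp
  have := hS.2 B hB
  rw [hBdiff] at this
  exact absurd this (by
    have : 1 < B.ncard := (Set.one_lt_ncard (Set.toFinite _)).mpr ⟨x, hx, y, hy, hxy⟩
    omega)

lemma connected_of_charSet (hG : G.Connected)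
    (hblock : ∀ B : Set V, G.IsBlock B → ∀ u ∈ B, ∀ w ∈ B, u ≠ w → G.Adj u w)
    (hcard : 1 < Fintype.card V) {S : Set V} (hS : CharSet G S) :
    (G.induce S).Connected := by
  refine induce_connected_iff.mpr ⟨charSet_nonempty hG hcard hS, ?_⟩
  have key : ∀ n : ℕ, ∀ x y : V, ∀ p : G.Walk x y, p.length ≤ n → x ∈ S → y ∈ S →
      ReachIn G S x y := by
    intro n
    induction n with
    | zero =>
        intro x y p hlen hx hy
        cases p with
        | nil => exact ReachIn.rfl' hx
        | cons h q => simp [SimpleGraph.Walk.length_cons] at hlen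
    | succ n ih =>
        intro x y p hlen hx hy
        cases p with
        | nil => exact ReachIn.rfl' hx
        | @cons _ b _ hxb q =>
            rw [SimpleGraph.Walk.length_cons] at hlen
            by_cases hbS : b ∈ S
            · exact (ReachIn.single hxb hx hbS).trans (ih b y q (by omega) hbS hy)
            · have hbcut : ¬ G.IsCutVertex b := fun hc => hbS (hS.1 b hc)
              cases q with
              | nil => exact absurd hy hbS
              | @cons _ c _ hbc r =>
                  rw [SimpleGraph.Walk.length_cons] at hlen
                  rcases eq_or_ne x c with rfl | hxc
                  · exact ih x y r (by omega) hx hy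
                  · have hxc' : G.Adj x c :=
                      simplicial_of_not_cut hblock hbcut hxb.symm hbc hxc
                    exact ih x y (SimpleGraph.Walk.cons hxc' r) (by simp; omega) hx hy
  intro x hx y hy
  obtain ⟨p⟩ := hG.preconnected x y
  exact key p.length x y p le_rfl hx hy

end ZFAux

namespace ZFAux
open SimpleGraph Set Classical

variable {V : Type} [Fintype V] {G : SimpleGraph V}

lemma nbhd_inter_self_singleton (d : V) : G.neighborSet d ∩ ({d} : Set V) = ∅ := by
  ext a
  simp only [Set.mem_inter_iff, SimpleGraph.mem_neighborSet, Set.mem_singleton_iff,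
    Set.mem_empty_iff_false, iff_false, not_and]
  rintro hadj rfl
  exact G.irrefl hadj

/-- Every connected zero forcing set of a graph with no pendant paths contains
every cut vertex. -/
lemma cut_mem_of_czfs (hG : G.Connected)
    (hnp : ∀ (v : V) (P : Set V), ¬ G.IsPendantPath v P)
    (hnpath : ¬ G.IsPathGraphOn Set.univ)
    {S : Set V} (h : G.IsConnectedZFS S) {v : V} (hv : G.IsCutVertex v) : v ∈ S := by
  by_contra hvS
  obtain ⟨⟨s₀, hs₀⟩, hSreach⟩ := induce_connected_iff.mp h.2
  have hs₀v : s₀ ∈ ({v}ᶜ : Set V) := fun h' => hvS (by rwa [Set.mem_singleton_iff.mp h'] at hs₀)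
  set C : Set V := {w | ReachIn G ({v}ᶜ : Set V) s₀ w} with hCdef
  have hSC : S ⊆ C := by
    intro x hx
    refine (hSreach s₀ hs₀ x hx).mono ?_
    intro a ha
    simp only [Set.mem_compl_iff, Set.mem_singleton_iff]
    rintro rfl
    exact hvS ha
  have hCv : v ∉ C := fun hc => (ReachIn.right_mem hc) rfl
  have hCclosed : ∀ x ∈ C, ∀ y, G.Adj x y → y ≠ v → y ∈ C :=
    fun x hx y hadj hy => ReachIn.tail hx hadj (by simpa using hy)
  have hCvert : ∀ u ∈ C, ∀ w, G.Adj u w → w ∉ C → w = v := by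
    intro u hu w hadj hw
    by_contra h'
    exact hw (hCclosed u hu w hadj h')
  -- existence of a vertex outside C ∪ {v}
  have hU : ∃ z, z ≠ v ∧ z ∉ C := by
    by_contra h'
    push_neg at h'
    apply hv
    refine induce_connected_iff.mpr ⟨⟨s₀, hs₀v⟩, fun x hx y hy => ?_⟩
    have hx' : x ∈ C := h' x (by simpa using hx)
    have hy' : y ∈ C := h' y (by simpa using hy)
    exact hx'.symm.trans hy'
  obtain ⟨z, hzv, hzC⟩ := hU
  set N : Set V := G.neighborSet v ∩ (C ∪ {v})ᶜ with hNdef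
  have hzT : z ∉ C ∪ {v} := by rintro (h' | h') ; exact hzC h'; exact hzv (Set.mem_singleton_iff.mp h')
  have hCuclosed : ∀ (X : Set V), (∀ w ∈ N, ∃ w' ∈ N, w' ≠ w) → Closed G (C ∪ {v}) := by
    intro _ hN
    rintro u (hu | hu) w hadj hw
    · exfalso
      by_cases hwC : w ∈ C
      · exact hw (Or.inl hwC)
      · exact hw (Or.inr (by simp [hCvert u hu w hadj hwC]))
    · rw [Set.mem_singleton_iff.mp hu] at hadj ⊢
      obtain ⟨w', hw', hww⟩ := hN w ⟨hadj, hw⟩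
      exact ⟨w', hw'.1, hww, fun hm => (by exact hw'.2 hm : False)⟩
  have hcase : N.ncard = 1 := by
    rcases Nat.lt_or_ge N.ncard 1 with h1 | h1
    · exfalso
      have hN0 : N = ∅ := by rw [← Set.ncard_eq_zero (Set.toFinite _)]; omega
      refine not_zfs_of_closed (hCuclosed ∅ ?_) (fun s hs => Or.inl (hSC hs))
        (fun h' => hzT (h' ▸ mem_univ z)) h.1
      intro w hw
      rw [hN0] at hw
      exact absurd hw (Set.notMem_empty w)
    rcases Nat.lt_or_ge 1 N.ncard with h2 | h2
    · exfalso
      refine not_zfs_of_closed (hCuclosed ∅ ?_) (fun s hs => Or.inl (hSC hs))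
        (fun h' => hzT (h' ▸ mem_univ z)) h.1
      intro w hw
      obtain ⟨w', hw', hww⟩ := Set.exists_ne_of_one_lt_ncard h2 w
      exact ⟨w', hw', hww⟩
    omega
  obtain ⟨d, hd⟩ := Set.ncard_eq_one.mp hcase
  have hdN : d ∈ N := by rw [hd]; rfl
  have hvd : G.Adj v d := hdN.1
  have hdC : d ∉ C := fun h' => hdN.2 (Or.inl h')
  have hdv : d ≠ v := fun h' => hdN.2 (Or.inr (by simp [h']))
  set D : Set V := {w | ReachIn G ({v}ᶜ : Set V) d w} with hDdef
  have hdD : d ∈ D := ReachIn.rfl' (by simpa using hdv)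
  have hDC : ∀ x, x ∈ D → x ∈ C → False := fun x hx hxc => hdC (hxc.trans hx.symm)
  have hDv : ∀ x ∈ D, x ≠ v := fun x hx => by
    have := ReachIn.right_mem hx; simpa using this
  have hDclosed : ∀ x ∈ D, ∀ y, G.Adj x y → y ≠ v → y ∈ D :=
    fun x hx y hadj hy => ReachIn.tail hx hadj (by simpa using hy)
  have hvDd : ∀ y, G.Adj v y → y ∈ D → y = d := by
    intro y hadj hyD
    have hyN : y ∈ N := ⟨hadj, by
      rintro (h' | h')
      · exact hDC y hyD h'
      · exact hDv y hyD (Set.mem_singleton_iff.mp h')⟩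
    rw [hd] at hyN
    exact hyN
  have hDT : ∀ x ∈ D, ∀ Q : Set V, x ∉ Q → x ∉ (C ∪ {v}) ∪ Q := by
    rintro x hx Q hxQ ((h' | h') | h')
    · exact hDC x hx h'
    · exact hDv x hx (Set.mem_singleton_iff.mp h')
    · exact hxQ h'
  have main : ∀ n : ℕ, ∀ Q : Set V, ∀ q : V,
      (q ∈ Q ∧ d ∈ Q ∧ Q ⊆ D ∧ (∀ x ∈ Q, ReachIn G Q d x) ∧
        (∀ x ∈ Q, x ≠ q → (G.neighborSet x ∩ D ⊆ Q ∧ (G.neighborSet x ∩ D).ncard ≤ 2)) ∧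
        (G.neighborSet q ∩ Q).ncard ≤ 1 ∧
        ((G.neighborSet d ∩ D).ncard ≤ 1 ∨ Q = {d})) → (D \ Q).ncard ≤ n → False := by
    intro n
    induction n with
    | zero =>
        rintro Q q ⟨hqQ, hdQ, hQD, hreach, hthird, hfourth, hfifth⟩ hn
        have hDQ : D = Q := by
          have he : D \ Q = ∅ := by rw [← Set.ncard_eq_zero (Set.toFinite _)]; omega
          apply Set.eq_of_subset_of_subset _ hQD
          intro x hx
          by_contra h'
          exact absurd (Set.eq_empty_iff_forall_notMem.mp he x) (by simp [hx, h'])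
        apply hnp v D
        have hDconn : (G.induce D).Connected := by
          refine induce_connected_iff.mpr ⟨⟨d, hdD⟩, fun x hx y hy => ?_⟩
          rw [hDQ]
          rw [hDQ] at hx hy
          exact (hreach x hx).symm.trans (hreach y hy)
        have hdeg1 : (G.neighborSet d ∩ D).ncard ≤ 1 := by
          rcases hfifth with h' | h'
          · exact h'
          · rw [hDQ, h', nbhd_inter_self_singleton]; simp
        refine ⟨⟨⟨d, hdD⟩, ?_, hDconn, ?_⟩, ⟨⟨d, hdD⟩, hDconn, ?_, d, hdD, hdeg1⟩,
          d, hdD, hvd, hdeg1⟩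
        · exact Set.disjoint_left.mpr (fun a ha h' => hDv a ha (Set.mem_singleton_iff.mp h'))
        · intro u hu w hadj hwv
          exact hDclosed u hu w hadj (by simpa using hwv)
        · intro x hx
          rcases eq_or_ne x q with rfl | hxq
          · calc (G.neighborSet x ∩ D).ncard = (G.neighborSet x ∩ Q).ncard := by rw [hDQ]
              _ ≤ 1 := hfourth
              _ ≤ 2 := by omega
          · exact (hthird x (hDQ ▸ hx) hxq).2
    | succ n ih =>
        rintro Q q ⟨hqQ, hdQ, hQD, hreach, hthird, hfourth, hfifth⟩ hn
        by_cases hDQ : D ⊆ Q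
        · exact ih Q q ⟨hqQ, hdQ, hQD, hreach, hthird, hfourth, hfifth⟩
            (by rw [Set.diff_eq_empty.mpr hDQ]; simp)
        obtain ⟨z', hz'D, hz'Q⟩ := Set.not_subset.mp hDQ
        set W : Set V := G.neighborSet q ∩ (D \ Q) with hWdef
        have hTclosed : (∀ w ∈ W, ∃ w' ∈ W, w' ≠ w) → Closed G ((C ∪ {v}) ∪ Q) := by
          intro hWc
          rintro u ((hu | hu) | hu) w hadj hw
          · exfalso
            by_cases hwC : w ∈ C
            · exact hw (Or.inl (Or.inl hwC))
            · exact hw (Or.inl (Or.inr (by simp [hCvert u hu w hadj hwC])))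
          · exfalso
            rw [Set.mem_singleton_iff.mp hu] at hadj
            by_cases hwD : w ∈ D
            · exact hw (Or.inr (hvDd w hadj hwD ▸ hdQ))
            · by_cases hwC : w ∈ C
              · exact hw (Or.inl (Or.inl hwC))
              · have hwN : w ∈ N := ⟨hadj, by
                  rintro (h' | h')
                  · exact hwC h'
                  · exact hw (Or.inl (Or.inr h'))⟩
                rw [hd] at hwN
                exact hwD (hwN ▸ hdD)
          · have hwD : w ∈ D := by
              rcases eq_or_ne w v with rfl | hwv
              · exact absurd (Or.inl (Or.inr rfl)) hw
              · exact hDclosed u (hQD hu) w hadj hwv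
            have hwQ : w ∉ Q := fun h' => hw (Or.inr h')
            rcases eq_or_ne u q with rfl | huq
            · obtain ⟨w', hw', hww⟩ := hWc w ⟨hadj, hwD, hwQ⟩
              exact ⟨w', hw'.1, hww, hDT w' hw'.2.1 Q hw'.2.2⟩
            · exact absurd ((hthird u hu huq).1 ⟨hadj, hwD⟩) hwQ
        have hSsub : S ⊆ (C ∪ {v}) ∪ Q := fun s hs => Or.inl (Or.inl (hSC hs))
        have hTne : (C ∪ {v}) ∪ Q ≠ univ := fun h' =>
          hDT z' hz'D Q hz'Q (h' ▸ mem_univ z')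
        rcases Nat.lt_or_ge W.ncard 1 with h1 | h1
        · have hW0 : W = ∅ := by rw [← Set.ncard_eq_zero (Set.toFinite _)]; omega
          refine not_zfs_of_closed (hTclosed ?_) hSsub hTne h.1
          intro w hw
          rw [hW0] at hw
          exact absurd hw (Set.notMem_empty w)
        rcases Nat.lt_or_ge 1 W.ncard with h2 | h2
        · refine not_zfs_of_closed (hTclosed ?_) hSsub hTne h.1
          intro w hw
          obtain ⟨w', hw', hww⟩ := Set.exists_ne_of_one_lt_ncard h2 w
          exact ⟨w', hw', hww⟩
        -- W = {e} : extend the chain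
        have hWone : W.ncard = 1 := by omega
        obtain ⟨e, he⟩ := Set.ncard_eq_one.mp hWone
        have heW : e ∈ W := by rw [he]; rfl
        have hqe : G.Adj q e := heW.1
        have heD : e ∈ D := heW.2.1
        have heQ : e ∉ Q := heW.2.2
        have hQ'sub : Q ⊆ insert e Q := Set.subset_insert e Q
        refine ih (insert e Q) e ⟨Set.mem_insert e Q, Or.inr hdQ,
          Set.insert_subset heD hQD, ?_, ?_, ?_, ?_⟩ ?_
        · rintro x (rfl | hx)
          · exact (((hreach q hqQ).mono hQ'sub).tail hqe (Set.mem_insert x Q))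
          · exact (hreach x hx).mono hQ'sub
        · rintro x (rfl | hx) hxe
          · exact absurd rfl hxe
          · rcases eq_or_ne x q with rfl | hxq
            · constructor
              · intro y hy
                by_cases hyQ : y ∈ Q
                · exact Or.inr hyQ
                · have : y ∈ W := ⟨hy.1, hy.2, hyQ⟩
                  rw [he] at this
                  exact Or.inl this
              · have hsub : G.neighborSet x ∩ D ⊆ (G.neighborSet x ∩ Q) ∪ {e} := by
                  intro y hy
                  by_cases hyQ : y ∈ Q
                  · exact Or.inl ⟨hy.1, hyQ⟩
                  · have : y ∈ W := ⟨hy.1, hy.2, hyQ⟩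
                    rw [he] at this
                    exact Or.inr this
                calc (G.neighborSet x ∩ D).ncard
                    ≤ ((G.neighborSet x ∩ Q) ∪ {e}).ncard :=
                      Set.ncard_le_ncard hsub (Set.toFinite _)
                  _ ≤ (G.neighborSet x ∩ Q).ncard + ({e} : Set V).ncard :=
                      Set.ncard_union_le _ _
                  _ ≤ 2 := by rw [Set.ncard_singleton]; omega
            · exact ⟨(hthird x hx hxq).1.trans hQ'sub, (hthird x hx hxq).2⟩
        · have hsub : G.neighborSet e ∩ insert e Q ⊆ {q} := by
            rintro y ⟨hy1, rfl | hy2⟩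
            · exact absurd hy1 (G.irrefl)
            · rcases eq_or_ne y q with rfl | hyq
              · rfl
              · exact absurd ((hthird y hy2 hyq).1 ⟨(by exact hy1.symm :
                  e ∈ G.neighborSet y), heD⟩) heQ
          calc (G.neighborSet e ∩ insert e Q).ncard ≤ ({q} : Set V).ncard :=
              Set.ncard_le_ncard hsub (Set.toFinite _)
            _ = 1 := Set.ncard_singleton q
        · rcases hfifth with h' | h'
          · exact Or.inl h'
          · left
            have hqd : q = d := by rw [h'] at hqQ; exact hqQ
            have hsub : G.neighborSet d ∩ D ⊆ ({e} : Set V) := by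
              intro y hy
              by_cases hyQ : y ∈ Q
              · rw [h'] at hyQ
                rw [Set.mem_singleton_iff.mp hyQ] at hy
                exact absurd hy.1 (G.irrefl)
              · have : y ∈ W := ⟨by rw [hqd]; exact hy.1, hy.2, hyQ⟩
                rw [he] at this
                exact this
            calc (G.neighborSet d ∩ D).ncard ≤ ({e} : Set V).ncard :=
                Set.ncard_le_ncard hsub (Set.toFinite _)
              _ = 1 := Set.ncard_singleton e
        · have heDQ : e ∈ D \ Q := ⟨heD, heQ⟩
          have hssub : D \ insert e Q ⊂ D \ Q := by
            constructor
            · intro a ha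
              exact ⟨ha.1, fun h' => ha.2 (Or.inr h')⟩
            · intro hsub
              exact (hsub heDQ).2 (Set.mem_insert e Q)
          have := Set.ncard_lt_ncard hssub (Set.toFinite _)
          omega
  exact main ((D \ {d}).ncard) {d} d
    ⟨rfl, rfl, by simpa using hdD,
      fun x hx => by rw [Set.mem_singleton_iff.mp hx]; exact ReachIn.rfl' rfl,
      fun x hx hxq => absurd (Set.mem_singleton_iff.mp hx) hxq,
      by rw [nbhd_inter_self_singleton]; simp,
      Or.inr rfl⟩ le_rfl

end ZFAux

namespace ZFAux
open SimpleGraph Set Classical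

variable {V : Type} [Fintype V] {G : SimpleGraph V}

/-- A vertex with a unique neighbor heads a pendant path `{x}`. -/
lemma two_nbrs (hG : G.Connected) (hcard : 1 < Fintype.card V)
    (hnp : ∀ (v : V) (P : Set V), ¬ G.IsPendantPath v P) (x : V) :
    ∃ u u', G.Adj x u ∧ G.Adj x u' ∧ u ≠ u' := by
  obtain ⟨u, hu⟩ := exists_adj hG hcard x
  by_contra h'
  push_neg at h'
  have huniq : ∀ w, G.Adj x w → w = u := fun w hw => by
    by_contra hne
    exact hne (h' w u hw hu)
  apply hnp u {x}
  have hxu : x ≠ u := hu.ne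
  have hconn : (G.induce ({x} : Set V)).Connected := by
    refine induce_connected_iff.mpr ⟨⟨x, rfl⟩, ?_⟩
    rintro a rfl b rfl
    exact ReachIn.rfl' rfl
  have hdeg : (G.neighborSet x ∩ ({x} : Set V)).ncard ≤ 1 := by
    rw [nbhd_inter_self_singleton]; simp
  refine ⟨⟨⟨x, rfl⟩, ?_, hconn, ?_⟩, ⟨⟨x, rfl⟩, hconn, ?_, x, rfl, hdeg⟩, x, rfl, hu.symm, hdeg⟩
  · exact Set.disjoint_left.mpr (by rintro a rfl h''; exact hxu (Set.mem_singleton_iff.mp h''))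
  · rintro a rfl w hadj hwu
    exact absurd (huniq w hadj) (by simpa using hwu)
  · rintro a rfl
    exact hdeg.trans (by omega)

/-- Key lemma: a closed set satisfying the characterization is everything. -/
lemma closed_charSet_univ (hG : G.Connected)
    (hblock : ∀ B : Set V, G.IsBlock B → ∀ u ∈ B, ∀ w ∈ B, u ≠ w → G.Adj u w)
    (hnp : ∀ (v : V) (P : Set V), ¬ G.IsPendantPath v P)
    (hcard : 1 < Fintype.card V)
    {T : Set V} (hcl : Closed G T) (hcut : ∀ v, G.IsCutVertex v → v ∈ T)
    (hbl : ∀ B, G.IsBlock B → (B \ T).ncard ≤ 1) : T = univ := by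
  by_contra hTu
  have hmiss : ∃ m, m ∉ T := by
    by_contra h'
    push_neg at h'
    exact hTu (Set.eq_univ_iff_forall.mpr h')
  obtain ⟨m₀, hm₀⟩ := hmiss
  -- canonical blocks of missing vertices
  have hblockOf : ∀ m, m ∉ T → ∃ B, G.IsBlock B ∧ insert m (G.neighborSet m) ⊆ B ∧
      B \ T = {m} := by
    intro m hm
    have hmc : ¬ G.IsCutVertex m := fun hc => hm (hcut m hc)
    obtain ⟨B, hB, hsub⟩ := exists_block_nbhd hblock hmc
    exact ⟨B, hB, hsub, eq_singleton_of_ncard_le_one ⟨hsub (Or.inl rfl), hm⟩ (hbl B hB)⟩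
  -- one descent step
  have hstep : ∀ u m', u ∈ T → m' ∉ T → G.Adj u m' →
      ∃ u' m'', u' ∈ T ∧ m'' ∉ T ∧ G.Adj u' m'' ∧
        {a | a ≠ u' ∧ ReachIn G ({u'}ᶜ : Set V) m'' a} ⊂
          {a | a ≠ u ∧ ReachIn G ({u}ᶜ : Set V) m' a} := by
    intro u m' huT hm' hadj
    obtain ⟨B', hB', hsubB', hdiffB'⟩ := hblockOf m' hm'
    have huB' : u ∈ B' := hsubB' (Or.inr hadj.symm)
    -- choose u' a neighbor of m' different from u
    obtain ⟨a, b, ha, hb, hab⟩ := two_nbrs hG hcard hnp m'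
    have hu' : ∃ u', G.Adj m' u' ∧ u' ≠ u := by
      rcases eq_or_ne a u with rfl | hau
      · exact ⟨b, hb, fun h' => hab h'.symm⟩
      · exact ⟨a, ha, hau⟩
    obtain ⟨u', hmu', hu'u⟩ := hu'
    have hu'B' : u' ∈ B' := hsubB' (Or.inr hmu')
    have hu'm' : u' ≠ m' := hmu'.ne'
    have hu'T : u' ∈ T := by
      by_contra h'
      have : u' ∈ B' \ T := ⟨hu'B', h'⟩
      rw [hdiffB'] at this
      exact hu'm' this
    obtain ⟨m'', hm''adj, hm''ne, hm''T⟩ := hcl u' hu'T m' hmu'.symm hm'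
    obtain ⟨B'', hB'', hsubB'', hdiffB''⟩ := hblockOf m'' hm''T
    have hu'B'' : u' ∈ B'' := hsubB'' (Or.inr hm''adj.symm)
    have hm''B' : m'' ∉ B' := by
      intro h'
      have : m'' ∈ B' \ T := ⟨h', hm''T⟩
      rw [hdiffB'] at this
      exact hm''ne this
    have hBne : B' ≠ B'' := fun h' => hm''B' (h' ▸ hsubB'' (Or.inl rfl))
    have hm'B' : m' ∈ B' := hsubB' (Or.inl rfl)
    have hm''B'' : m'' ∈ B'' := hsubB'' (Or.inl rfl)
    have hm'u' : m' ≠ u' := hu'm'.symm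
    have hm''u' : m'' ≠ u' := fun h' => hm''T (h' ▸ hu'T)
    have hsep : ¬ ReachIn G ({u'}ᶜ : Set V) m' m'' :=
      separation hB' hB'' hBne hu'B' hu'B'' hm'B' hm'u' hm''B'' hm''u'
    refine ⟨u', m'', hu'T, hm''T, hm''adj, ?_⟩
    have hm'u : m' ≠ u := fun h' => hm' (h' ▸ huT)
    have hm''u : m'' ≠ u := fun h' => hm''T (h' ▸ huT)
    have hreach'' : ReachIn G ({u}ᶜ : Set V) m' m'' := by
      refine (ReachIn.single hmu' (by simpa using hm'u) (by simpa using hu'u)).tail hm''adj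
        (by simpa using hm''u)
    constructor
    · rintro x ⟨hxu', hxr⟩
      obtain ⟨p, hp⟩ := hxr
      have hup : u ∉ p.support := by
        intro hup
        apply hsep
        exact ((reachIn_of_walk (p.takeUntil u hup) (fun c hc =>
          hp c (p.support_takeUntil_subset hup hc))).tail hadj
          (by simpa using hm'u')).symm
      have hxr' : ReachIn G ({u}ᶜ : Set V) m'' x := by
        refine ⟨p, fun c hc => ?_⟩
        simp only [Set.mem_compl_iff, Set.mem_singleton_iff]
        rintro rfl
        exact hup hc
      exact ⟨fun h' => hup (h' ▸ p.end_mem_support), hreach''.trans hxr'⟩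
    · intro hsub
      have hm'K : m' ∈ {a | a ≠ u ∧ ReachIn G ({u}ᶜ : Set V) m' a} :=
        ⟨hm'u, ReachIn.rfl' (by simpa using hm'u)⟩
      have := hsub hm'K
      exact hsep this.2.symm
  -- descent
  have hdescent : ∀ n : ℕ, ∀ u m', u ∈ T → m' ∉ T → G.Adj u m' →
      ({a | a ≠ u ∧ ReachIn G ({u}ᶜ : Set V) m' a}).ncard ≤ n → False := by
    intro n
    induction n with
    | zero =>
        intro u m' huT hm' hadj hle
        have hm'K : m' ∈ {a | a ≠ u ∧ ReachIn G ({u}ᶜ : Set V) m' a} :=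
          ⟨fun h' => hm' (h' ▸ huT), ReachIn.rfl' (by
            simp only [Set.mem_compl_iff, Set.mem_singleton_iff]
            exact fun h' => hm' (h' ▸ huT))⟩
        have : ({a | a ≠ u ∧ ReachIn G ({u}ᶜ : Set V) m' a}).ncard = 0 := by omega
        rw [Set.ncard_eq_zero (Set.toFinite _)] at this
        exact absurd (this ▸ hm'K) (Set.notMem_empty m')
    | succ n ih =>
        intro u m' huT hm' hadj hle
        obtain ⟨u', m'', hu'T, hm''T, hadj', hss⟩ := hstep u m' huT hm' hadj
        have hlt := Set.ncard_lt_ncard hss (Set.toFinite _)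
        exact ih u' m'' hu'T hm''T hadj' (by omega)
  obtain ⟨B₀, hB₀, hsubB₀, hdiffB₀⟩ := hblockOf m₀ hm₀
  obtain ⟨u₀, hu₀⟩ := exists_adj hG hcard m₀
  have hu₀B₀ : u₀ ∈ B₀ := hsubB₀ (Or.inr hu₀)
  have hu₀m₀ : u₀ ≠ m₀ := hu₀.ne'
  have hu₀T : u₀ ∈ T := by
    by_contra h'
    have : u₀ ∈ B₀ \ T := ⟨hu₀B₀, h'⟩
    rw [hdiffB₀] at this
    exact hu₀m₀ this
  exact hdescent _ u₀ m₀ hu₀T hm₀ hu₀.symm le_rfl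

/-- Characterization implies zero forcing. -/
lemma zfs_of_charSet (hG : G.Connected)
    (hblock : ∀ B : Set V, G.IsBlock B → ∀ u ∈ B, ∀ w ∈ B, u ≠ w → G.Adj u w)
    (hnp : ∀ (v : V) (P : Set V), ¬ G.IsPendantPath v P)
    (hcard : 1 < Fintype.card V)
    {S : Set V} (hS : CharSet G S) : G.IsZeroForcingSet S := by
  apply zfs_of_closed_forall
  intro T hcl hST
  exact closed_charSet_univ hG hblock hnp hcard hcl
    (fun v hv => hST (hS.1 v hv))
    (fun B hB => le_trans (Set.ncard_le_ncard (Set.diff_subset_diff_right hST)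
      (Set.toFinite _)) (hS.2 B hB))

end ZFAux

namespace ZFAux
open SimpleGraph Set Classical

variable {V : Type} [Fintype V] {G : SimpleGraph V}

/-- The characterization of connected zero forcing sets for block graphs with no
pendant paths that are not paths. -/
lemma czfs_iff_charSet (hG : G.Connected)
    (hblock : ∀ B : Set V, G.IsBlock B → ∀ u ∈ B, ∀ w ∈ B, u ≠ w → G.Adj u w)
    (hnp : ∀ (v : V) (P : Set V), ¬ G.IsPendantPath v P)
    (hnpath : ¬ G.IsPathGraphOn Set.univ) {S : Set V} :
    G.IsConnectedZFS S ↔ CharSet G S := by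
  have hcard : 1 < Fintype.card V := card_two_le hG hnpath
  constructor
  · intro h
    have hcut : ∀ v, G.IsCutVertex v → v ∈ S := fun v hv =>
      cut_mem_of_czfs hG hnp hnpath h hv
    exact ⟨hcut, fun B hB => block_diff_le_one_of_zfs hblock h.1 hcut hB⟩
  · intro hS
    exact ⟨zfs_of_charSet hG hblock hnp hcard hS, connected_of_charSet hG hblock hcard hS⟩

lemma charSet_mono {S S' : Set V} (hS : CharSet G S) (hsub : S ⊆ S') : CharSet G S' :=
  ⟨fun v hv => hsub (hS.1 v hv), fun B hB =>
    le_trans (Set.ncard_le_ncard (Set.diff_subset_diff_right hsub) (Set.toFinite _))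
      (hS.2 B hB)⟩

/-- The exchange property for minimal connected zero forcing supersets. -/
lemma exchange (hG : G.Connected)
    (hblock : ∀ B : Set V, G.IsBlock B → ∀ u ∈ B, ∀ w ∈ B, u ≠ w → G.Adj u w)
    (hnp : ∀ (v : V) (P : Set V), ¬ G.IsPendantPath v P)
    (hnpath : ¬ G.IsPathGraphOn Set.univ)
    {A Sa Sb : Set V} (hASa : A ⊆ Sa) (hASb : A ⊆ Sb)
    (cha : CharSet G Sa) (chb : CharSet G Sb)
    (mina : ∀ S' : Set V, A ⊆ S' → S' ⊆ Sa → G.IsConnectedZFS S' → S' = Sa)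
    {x : V} (hx : x ∈ Sa \ Sb) :
    ∃ y, y ∈ Sb \ Sa ∧ ∃ B, G.IsBlock B ∧ B \ Sb = {x} ∧ B \ Sa = {y} := by
  have hxA : x ∉ A := fun h' => hx.2 (hASb h')
  have hxnc : ¬ G.IsCutVertex x := fun hc => hx.2 (chb.1 x hc)
  obtain ⟨B, hB, hsub⟩ := exists_block_nbhd hblock hxnc
  have hxB : x ∈ B := hsub (Or.inl rfl)
  have hBb : B \ Sb = {x} := eq_singleton_of_ncard_le_one ⟨hxB, hx.2⟩ (chb.2 B hB)
  have hexy : ∃ y ∈ B, y ∉ Sa := by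
    by_contra h'
    push_neg at h'
    -- then Sa \ {x} would still be a connected zero forcing superset of A
    have hchar' : CharSet G (Sa \ {x}) := by
      constructor
      · intro v hv
        exact ⟨cha.1 v hv, by
          simp only [Set.mem_singleton_iff]
          rintro rfl
          exact hxnc hv⟩
      · intro B'' hB''
        by_cases hxB'' : x ∈ B''
        · have hBB : B'' = B := block_unique hblock hxnc hB'' hxB'' hB hxB
          have hsub2 : B'' \ (Sa \ {x}) ⊆ {x} := by
            rintro a ⟨haB, haS⟩
            by_contra hax
            exact haS ⟨h' a (hBB ▸ haB), by simpa using hax⟩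
          calc (B'' \ (Sa \ {x})).ncard ≤ ({x} : Set V).ncard :=
              Set.ncard_le_ncard hsub2 (Set.toFinite _)
            _ = 1 := Set.ncard_singleton x
        · have heq : B'' \ (Sa \ {x}) = B'' \ Sa := by
            ext a
            simp only [Set.mem_diff, Set.mem_singleton_iff]
            constructor
            · rintro ⟨haB, haS⟩
              refine ⟨haB, fun h'' => haS ⟨h'', fun hax => ?_⟩⟩
              exact hxB'' ((Set.mem_singleton_iff.mp hax) ▸ haB)
            · rintro ⟨haB, haS⟩
              exact ⟨haB, fun h'' => haS h''.1⟩
          rw [heq]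
          exact cha.2 B'' hB''
    have hczfs' : G.IsConnectedZFS (Sa \ {x}) :=
      (czfs_iff_charSet hG hblock hnp hnpath).mpr hchar'
    have hA' : A ⊆ Sa \ {x} := fun a ha => ⟨hASa ha, by
      simp only [Set.mem_singleton_iff]
      rintro rfl
      exact hxA ha⟩
    have := mina (Sa \ {x}) hA' Set.diff_subset hczfs'
    have hx1 : x ∈ Sa := hx.1
    rw [← this] at hx1
    exact hx1.2 rfl
  obtain ⟨y, hyB, hySa⟩ := hexy
  have hBa : B \ Sa = {y} := eq_singleton_of_ncard_le_one ⟨hyB, hySa⟩ (cha.2 B hB)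
  have hySb : y ∈ Sb := by
    by_contra h'
    have : y ∈ B \ Sb := ⟨hyB, h'⟩
    rw [hBb] at this
    have hyx : y = x := Set.mem_singleton_iff.mp this
    rw [hyx] at hySa
    exact hySa hx.1
  exact ⟨y, ⟨hySb, hySa⟩, B, hB, hBb, hBa⟩

lemma diff_ncard_le (hG : G.Connected)
    (hblock : ∀ B : Set V, G.IsBlock B → ∀ u ∈ B, ∀ w ∈ B, u ≠ w → G.Adj u w)
    (hnp : ∀ (v : V) (P : Set V), ¬ G.IsPendantPath v P)
    (hnpath : ¬ G.IsPathGraphOn Set.univ)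
    {A Sa Sb : Set V} (hASa : A ⊆ Sa) (hASb : A ⊆ Sb)
    (cha : CharSet G Sa) (chb : CharSet G Sb)
    (mina : ∀ S' : Set V, A ⊆ S' → S' ⊆ Sa → G.IsConnectedZFS S' → S' = Sa) :
    (Sa \ Sb).ncard ≤ (Sb \ Sa).ncard := by
  have key := fun (x : V) (hx : x ∈ Sa \ Sb) =>
    exchange hG hblock hnp hnpath hASa hASb cha chb mina hx
  set f : V → V := fun x => if hx : x ∈ Sa \ Sb then (key x hx).choose else x with hf
  apply Set.ncard_le_ncard_of_injOn f
  · intro a ha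
    have := (key a ha).choose_spec
    simp only [hf, dif_pos ha]
    exact this.1
  · intro a ha b hb hab
    obtain ⟨haS, Ba, hBa, hBab, hBaa⟩ := (key a ha).choose_spec
    obtain ⟨hbS, Bb, hBb', hBbb, hBba⟩ := (key b hb).choose_spec
    simp only [hf, dif_pos ha, dif_pos hb] at hab
    have hync : ¬ G.IsCutVertex ((key a ha).choose) := fun hc => haS.2 (cha.1 _ hc)
    have hyBa : (key a ha).choose ∈ Ba := by
      have : (key a ha).choose ∈ Ba \ Sa := by rw [hBaa]; rfl
      exact this.1
    have hyBb : (key a ha).choose ∈ Bb := by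
      have : (key b hb).choose ∈ Bb \ Sa := by rw [hBba]; rfl
      rw [← hab] at this
      exact this.1
    have hBeq : Ba = Bb := block_unique hblock hync hBa hyBa hBb' hyBb
    have ha' : a ∈ Ba \ Sb := by rw [hBab]; rfl
    have hb' : b ∈ Ba \ Sb := by rw [hBeq, hBbb]; rfl
    rw [hBab] at hb'
    exact (Set.mem_singleton_iff.mp hb').symm

end ZFAux


/-- For a block graph `G` with no pendant paths, different from a path: supersets of
connected zero forcing sets are connected zero forcing sets, and for every `A ⊆ V` all
minimal supersets of `A` which are connected zero forcing sets have the same cardinality. -/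
theorem stmt19 {V : Type} [Fintype V] (G : SimpleGraph V) (hG : G.Connected)
    (hblock : ∀ B : Set V, G.IsBlock B → ∀ u ∈ B, ∀ w ∈ B, u ≠ w → G.Adj u w)
    (hnp : ∀ (v : V) (P : Set V), ¬ G.IsPendantPath v P)
    (hnpath : ¬ G.IsPathGraphOn Set.univ) :
    (∀ S S' : Set V, G.IsConnectedZFS S → S ⊆ S' → G.IsConnectedZFS S') ∧
    (∀ A S₁ S₂ : Set V, A ⊆ S₁ → A ⊆ S₂ →
      G.IsConnectedZFS S₁ → G.IsConnectedZFS S₂ →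
      (∀ S' : Set V, A ⊆ S' → S' ⊆ S₁ → G.IsConnectedZFS S' → S' = S₁) →
      (∀ S' : Set V, A ⊆ S' → S' ⊆ S₂ → G.IsConnectedZFS S' → S' = S₂) →
      S₁.ncard = S₂.ncard) := by
  have hiff := fun {S : Set V} => ZFAux.czfs_iff_charSet (G := G) hG hblock hnp hnpath (S := S)
  constructor
  · intro S S' hS hsub
    exact hiff.mpr (ZFAux.charSet_mono (hiff.mp hS) hsub)
  · intro A S₁ S₂ hA1 hA2 h1 h2 min1 min2
    have ch1 := hiff.mp h1
    have ch2 := hiff.mp h2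
    have hle1 := ZFAux.diff_ncard_le hG hblock hnp hnpath hA1 hA2 ch1 ch2 min1
    have hle2 := ZFAux.diff_ncard_le hG hblock hnp hnpath hA2 hA1 ch2 ch1 min2
    have heq : (S₁ \ S₂).ncard = (S₂ \ S₁).ncard := le_antisymm hle1 hle2
    have e1 := Set.ncard_inter_add_ncard_diff_eq_ncard S₁ S₂ (Set.toFinite _)
    have e2 := Set.ncard_inter_add_ncard_diff_eq_ncard S₂ S₁ (Set.toFinite _)
    rw [Set.inter_comm S₂ S₁] at e2
    omega
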